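/- For every ε, α ∈ (0,1) and δ ≥ 0 there exists a constant C = C(ε, α) > 0 such that for every n-player m-action game, the test that outputs YES if the empirical distribution s^k of the k observed action profiles is a (δ + ε/2)-correlated equilibrium and NO otherwise is an ε-test with error probability α for δ-correlated equilibrium whenever k ≥ C·(m·ln m + ln n): for every x ∈ Δ(A), if x is a δ-correlated equilibrium the test outputs YES with probability at least 1 − α, and if x is not a (δ+ε)-correlated equilibrium the test outputs NO with probability at least 1 − α (probabilities over k i.i.d. samples from x). -/

import Mathlib

open Finset

open scoped Classical

noncomputable section

/-- `x` is a probability distribution on the finite type `A`. -/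
def IsDist {A : Type*} [Fintype A] (x : A → ℝ) : Prop :=
  (∀ a, 0 ≤ x a) ∧ ∑ a, x a = 1

/-- Empirical distribution of `k` sampled elements of `A`. -/
def empJoint {A : Type*} [Fintype A] [DecidableEq A] (k : ℕ) (a : Fin k → A) : A → ℝ :=
  fun p => ((univ.filter fun t => a t = p).card : ℝ) / k

/-- Probability of the event `E` over `k` i.i.d. samples from the distribution `x`. -/
def PrJoint {A : Type*} [Fintype A] (k : ℕ) (x : A → ℝ) (E : (Fin k → A) → Prop) : ℝ :=
  ∑ a : Fin k → A, if E a then ∏ t, x (a t) else 0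

/-- `x ∈ Δ(A)` is an `ε`-coarse correlated equilibrium of the game `u`:
for every player `i` and action `j`, the expected regret for not playing `j`
is at most `ε`. -/
def IsCCE {n m : ℕ} (u : Fin n → (Fin n → Fin m) → ℝ)
    (x : (Fin n → Fin m) → ℝ) (ε : ℝ) : Prop :=
  ∀ (i : Fin n) (j : Fin m),
    ∑ a : Fin n → Fin m, x a * (u i (Function.update a i j) - u i a) ≤ ε

/-- `x ∈ Δ(A)` is an `ε`-correlated equilibrium of the game `u`:
for every player `i` and deviation map `f : [m] → [m]`, the expected regret is
at most `ε`. -/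
def IsCE {n m : ℕ} (u : Fin n → (Fin n → Fin m) → ℝ)
    (x : (Fin n → Fin m) → ℝ) (ε : ℝ) : Prop :=
  ∀ (i : Fin n) (f : Fin m → Fin m),
    ∑ a : Fin n → Fin m, x a * (u i (Function.update a i (f (a i))) - u i a) ≤ ε

/-- A distribution on a finite set is `k`-uniform if every probability is an integer
multiple of `1/k` (equivalently, it is uniform over a size-`k` multiset). -/
def IsKUniform {A : Type*} [Fintype A] (k : ℕ) (x : A → ℝ) : Prop :=
  ∀ a, ∃ c : ℕ, x a = (c : ℝ) / k
/-- For every `ε, α ∈ (0,1)` there is a constant `C = C(ε,α) > 0` such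
that for every `δ ≥ 0` and every `n`-player `m`-action game, the test that outputs YES
iff the empirical distribution of the `k` observed action profiles is a `(δ + ε/2)`-
correlated equilibrium is an `ε`-test with error probability `α` for `δ`-correlated
equilibrium whenever `k ≥ C(m ln m + ln n)`: if `x` is a `δ`-correlated equilibrium the
test answers YES with probability ≥ `1 − α`; if `x` is not a `(δ+ε)`-correlated
equilibrium it answers NO with probability ≥ `1 − α`. -/

lemma sum_prod_pi {A : Type*} [Fintype A] (k : ℕ) (F : A → ℝ) :
    ∑ a : Fin k → A, ∏ t, F (a t) = (∑ y, F y) ^ k := by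
  rw [← Fin.prod_const k (∑ y, F y), Finset.prod_univ_sum, Fintype.piFinset_univ]

lemma prJoint_nonneg {A : Type*} [Fintype A] (k : ℕ) (x : A → ℝ) (hx : ∀ a, 0 ≤ x a)
    (E : (Fin k → A) → Prop) : 0 ≤ PrJoint k x E := by
  apply Finset.sum_nonneg
  intro a _
  split
  · exact Finset.prod_nonneg fun t _ => hx _
  · exact le_rfl

lemma prJoint_mono {A : Type*} [Fintype A] (k : ℕ) (x : A → ℝ) (hx : ∀ a, 0 ≤ x a)
    (E F : (Fin k → A) → Prop) (h : ∀ a, E a → F a) : PrJoint k x E ≤ PrJoint k x F := by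
  apply Finset.sum_le_sum
  intro a _
  by_cases hE : E a
  · simp [hE, h a hE]
  · simp only [hE, if_false]
    split
    · exact Finset.prod_nonneg fun t _ => hx _
    · exact le_rfl

lemma prJoint_compl {A : Type*} [Fintype A] (k : ℕ) (x : A → ℝ) (hx : IsDist x)
    (E : (Fin k → A) → Prop) : PrJoint k x E + PrJoint k x (fun a => ¬ E a) = 1 := by
  unfold PrJoint
  beta_reduce
  rw [← Finset.sum_add_distrib]
  have : ∀ a : Fin k → A, ((if E a then ∏ t, x (a t) else 0) + if ¬ E a then ∏ t, x (a t) else 0)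
      = ∏ t, x (a t) := by
    intro a; by_cases hE : E a <;> simp [hE]
  trans (∑ a : Fin k → A, ∏ t, x (a t))
  · exact Finset.sum_congr rfl fun a _ => by by_cases h : E a <;> simp [h]
  · rw [sum_prod_pi, hx.2, one_pow]

lemma prJoint_union {A : Type*} [Fintype A] (k : ℕ) (x : A → ℝ) (hx : ∀ a, 0 ≤ x a)
    {ι : Type*} (s : Finset ι) (E : ι → (Fin k → A) → Prop) :
    PrJoint k x (fun a => ∃ i ∈ s, E i a) ≤ ∑ i ∈ s, PrJoint k x (E i) := by
  unfold PrJoint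
  beta_reduce
  rw [Finset.sum_comm]
  apply Finset.sum_le_sum
  intro a _
  have hnn : ∀ j ∈ s, 0 ≤ (if E j a then ∏ t, x (a t) else 0) := by
    intro j _
    split
    · exact Finset.prod_nonneg fun t _ => hx _
    · exact le_rfl
  split
  · next hE =>
      obtain ⟨i, hi, hEi⟩ := hE
      have h2 := Finset.single_le_sum hnn hi
      rwa [if_pos hEi] at h2
  · exact Finset.sum_nonneg hnn

lemma exp_le_one_add_add_sq {z : ℝ} (hz : |z| ≤ 1) : Real.exp z ≤ 1 + z + z ^ 2 := by
  have h := Real.exp_bound hz (n := 2) (by norm_num)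
  have h2 : ∑ m ∈ range 2, z ^ m / (m.factorial : ℝ) = 1 + z := by
    simp [Finset.sum_range_succ]
  rw [h2] at h
  have h3 := (abs_le.1 h).2
  have h4 : ((Nat.succ 2 : ℕ) : ℝ) / ((Nat.factorial 2 : ℕ) * (2:ℕ)) = 3/4 := by
    norm_num [Nat.factorial]
  rw [h4] at h3
  nlinarith [sq_abs z, sq_nonneg z]

lemma emp_sum {A : Type*} [Fintype A] [DecidableEq A] (k : ℕ) (a : Fin k → A) (g : A → ℝ) :
    ∑ p, empJoint k a p * g p = (∑ t, g (a t)) / k := by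
  unfold empJoint
  have key : ∑ p, ((univ.filter fun t => a t = p).card : ℝ) * g p = ∑ t, g (a t) := by
    have h1 : ∀ p, ((univ.filter fun t => a t = p).card : ℝ) * g p
        = ∑ t : Fin k, if a t = p then g p else 0 := by
      intro p
      rw [← Finset.sum_filter, Finset.sum_const, nsmul_eq_mul]
    rw [Finset.sum_congr rfl fun p _ => h1 p, Finset.sum_comm]
    apply Finset.sum_congr rfl
    intro t _
    rw [Finset.sum_ite_eq univ (a t) g]
    simp
  rw [← key, Finset.sum_div]
  apply Finset.sum_congr rfl
  intro p _
  ring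

lemma chernoff {A : Type*} [Fintype A] (k : ℕ) (x : A → ℝ) (hx : IsDist x)
    (g : A → ℝ) (hg : ∀ a, |g a| ≤ 1) (lam t : ℝ) (hlam : 0 < lam) (hlam2 : 2 * lam ≤ 1) :
    PrJoint k x (fun a => (k : ℝ) * (∑ y, x y * g y) + (k : ℝ) * t ≤ ∑ s : Fin k, g (a s))
      ≤ Real.exp ((k : ℝ) * (4 * lam ^ 2 - lam * t)) := by
  set μ := ∑ y, x y * g y with hμ
  have hμ1 : |μ| ≤ 1 := by
    calc |μ| ≤ ∑ y, |x y * g y| := Finset.abs_sum_le_sum_abs _ _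
      _ ≤ ∑ y, x y := by
          apply Finset.sum_le_sum
          intro y _
          rw [abs_mul, abs_of_nonneg (hx.1 y)]
          calc x y * |g y| ≤ x y * 1 := by
                exact mul_le_mul_of_nonneg_left (hg y) (hx.1 y)
            _ = x y := mul_one _
      _ = 1 := hx.2
  set F : A → ℝ := fun y => x y * Real.exp (lam * (g y - μ - t)) with hF
  have hFnn : ∀ y, 0 ≤ F y := fun y => mul_nonneg (hx.1 y) (Real.exp_pos _).le
  -- Step 1: PrJoint ≤ ∑ a, ∏ t, F (a t)
  have step1 : PrJoint k x (fun a => (k : ℝ) * μ + (k : ℝ) * t ≤ ∑ s : Fin k, g (a s))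
      ≤ ∑ a : Fin k → A, ∏ s, F (a s) := by
    apply Finset.sum_le_sum
    intro a _
    have hprod : ∏ s, F (a s)
        = (∏ s, x (a s)) * Real.exp (lam * ((∑ s : Fin k, g (a s)) - (k : ℝ) * μ - (k : ℝ) * t)) := by
      rw [hF]
      rw [Finset.prod_mul_distrib, ← Real.exp_sum]
      congr 1
      rw [← Finset.mul_sum]
      congr 1
      rw [Finset.sum_sub_distrib, Finset.sum_sub_distrib, Finset.sum_const, Finset.sum_const,
        Finset.card_univ, Fintype.card_fin, nsmul_eq_mul, nsmul_eq_mul]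
    split
    · next hE =>
        rw [hprod]
        nth_rewrite 1 [← mul_one (∏ s, x (a s))]
        apply mul_le_mul_of_nonneg_left _ (Finset.prod_nonneg fun s _ => hx.1 _)
        rw [← Real.exp_zero]
        apply Real.exp_le_exp.2
        have : 0 ≤ (∑ s : Fin k, g (a s)) - (k : ℝ) * μ - (k : ℝ) * t := by linarith
        positivity
    · exact Finset.prod_nonneg fun s _ => hFnn _
  -- Step 2: factorize
  rw [sum_prod_pi] at step1
  -- Step 3: bound the single-sample mgf
  have step3 : ∑ y, F y ≤ Real.exp (4 * lam ^ 2 - lam * t) := by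
    have hsplit : ∀ y, F y = x y * Real.exp (lam * (g y - μ)) * Real.exp (-(lam * t)) := by
      intro y
      rw [hF, mul_assoc, ← Real.exp_add]
      ring_nf
    have hbound : ∑ y, x y * Real.exp (lam * (g y - μ)) ≤ 1 + 4 * lam ^ 2 := by
      calc ∑ y, x y * Real.exp (lam * (g y - μ))
          ≤ ∑ y, x y * (1 + lam * (g y - μ) + (lam * (g y - μ)) ^ 2) := by
            apply Finset.sum_le_sum
            intro y _
            apply mul_le_mul_of_nonneg_left _ (hx.1 y)
            apply exp_le_one_add_add_sq
            rw [abs_mul, abs_of_pos hlam]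
            have h2 : |g y - μ| ≤ 2 := by
              have := hg y
              rw [abs_le] at this hμ1 ⊢
              constructor <;> linarith
            nlinarith
        _ ≤ 1 + 4 * lam ^ 2 := by
            have expand : ∑ y, x y * (1 + lam * (g y - μ) + (lam * (g y - μ)) ^ 2)
                = 1 + lam * (μ - μ) + lam ^ 2 * ∑ y, x y * (g y - μ) ^ 2 := by
              have e1 : ∀ y, x y * (1 + lam * (g y - μ) + (lam * (g y - μ)) ^ 2)
                  = x y + lam * (x y * g y - x y * μ) + lam ^ 2 * (x y * (g y - μ) ^ 2) := by
                intro y; ring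
              rw [Finset.sum_congr rfl fun y _ => e1 y]
              rw [Finset.sum_add_distrib, Finset.sum_add_distrib, ← Finset.mul_sum,
                ← Finset.mul_sum, Finset.sum_sub_distrib, ← Finset.sum_mul, hx.2]
              rw [← hμ]; ring_nf
            rw [expand]
            have hvar : ∑ y, x y * (g y - μ) ^ 2 ≤ 4 := by
              calc ∑ y, x y * (g y - μ) ^ 2 ≤ ∑ y, x y * 4 := by
                    apply Finset.sum_le_sum
                    intro y _
                    apply mul_le_mul_of_nonneg_left _ (hx.1 y)
                    have := hg y
                    rw [abs_le] at this hμ1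
                    nlinarith
                _ = 4 := by rw [← Finset.sum_mul, hx.2, one_mul]
            nlinarith
    calc ∑ y, F y = (∑ y, x y * Real.exp (lam * (g y - μ))) * Real.exp (-(lam * t)) := by
          rw [Finset.sum_congr rfl fun y _ => hsplit y, ← Finset.sum_mul]
      _ ≤ (1 + 4 * lam ^ 2) * Real.exp (-(lam * t)) := by
          apply mul_le_mul_of_nonneg_right hbound (Real.exp_pos _).le
      _ ≤ Real.exp (4 * lam ^ 2) * Real.exp (-(lam * t)) := by
          apply mul_le_mul_of_nonneg_right _ (Real.exp_pos _).le
          have := Real.add_one_le_exp (4 * lam ^ 2)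
          linarith
      _ = Real.exp (4 * lam ^ 2 - lam * t) := by rw [← Real.exp_add]; ring_nf
  -- Step 4: combine
  calc PrJoint k x _ ≤ (∑ y, F y) ^ k := step1
    _ ≤ (Real.exp (4 * lam ^ 2 - lam * t)) ^ k := by
        apply pow_le_pow_left₀ (Finset.sum_nonneg fun y _ => hFnn y) step3
    _ = Real.exp ((k : ℝ) * (4 * lam ^ 2 - lam * t)) := by
        rw [← Real.exp_nat_mul]

lemma prJoint_eq_one {A : Type*} [Fintype A] (k : ℕ) (x : A → ℝ) (hx : IsDist x)
    (E : (Fin k → A) → Prop) (hE : ∀ a, E a) : PrJoint k x E = 1 := by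
  have hc := prJoint_compl k x hx E
  have h0 : PrJoint k x (fun a => ¬ E a) = 0 :=
    Finset.sum_eq_zero fun a _ => by simp [hE a]
  linarith

lemma isCE_one {n : ℕ} (u : Fin n → (Fin n → Fin 1) → ℝ) (y : (Fin n → Fin 1) → ℝ)
    {η : ℝ} (hη : 0 ≤ η) : IsCE u y η := by
  intro i f
  have hupd : ∀ a : Fin n → Fin 1, Function.update a i (f (a i)) = a := by
    intro a
    have h1 : f (a i) = a i := Subsingleton.elim _ _
    rw [h1, Function.update_eq_self]
  simp only [hupd, sub_self, mul_zero, Finset.sum_const_zero]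
  exact hη

set_option maxHeartbeats 1600000 in
theorem stmt10 (ε α : ℝ) (hε : 0 < ε ∧ ε < 1) (hα : 0 < α ∧ α < 1) :
    ∃ C > (0 : ℝ), ∀ δ : ℝ, 0 ≤ δ → ∀ (n m : ℕ), 0 < n → 0 < m →
      ∀ u : Fin n → (Fin n → Fin m) → ℝ, (∀ i a, 0 ≤ u i a ∧ u i a ≤ 1) →
      ∀ k : ℕ, (k : ℝ) ≥ C * ((m : ℝ) * Real.log m + Real.log n) →
        (∀ x : (Fin n → Fin m) → ℝ, IsDist x → IsCE u x δ →
          PrJoint k x (fun a => IsCE u (empJoint k a) (δ + ε / 2)) ≥ 1 - α) ∧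
        (∀ x : (Fin n → Fin m) → ℝ, IsDist x → ¬ IsCE u x (δ + ε) →
          PrJoint k x (fun a => ¬ IsCE u (empJoint k a) (δ + ε / 2)) ≥ 1 - α) := by
  obtain ⟨hε0, hε1⟩ := hε
  obtain ⟨hα0, hα1⟩ := hα
  set L : ℝ := -Real.log α with hLdef
  have hL : 0 < L := by
    have := Real.log_neg hα0 hα1
    linarith
  refine ⟨64 / ε ^ 2 * (1 + L), by positivity, ?_⟩
  intro δ hδ n m hn hm u hu k hk
  by_cases hm1 : m = 1
  · subst hm1
    constructor
    · intro x hx _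
      have h1 : PrJoint k x (fun a => IsCE u (empJoint k a) (δ + ε / 2)) = 1 :=
        prJoint_eq_one k x hx _ fun a => isCE_one u _ (by linarith)
      rw [h1]; linarith
    · intro x hx hnCE
      exact absurd (isCE_one u x (by linarith)) hnCE
  · -- m ≥ 2
    have hm2 : 2 ≤ m := by omega
    have hm2' : (2 : ℝ) ≤ (m : ℝ) := by exact_mod_cast hm2
    have hn1 : (1 : ℝ) ≤ (n : ℝ) := by exact_mod_cast hn
    set S : ℝ := (m : ℝ) * Real.log m + Real.log n with hSdef
    have hS1 : 1 ≤ S := by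
      have hlog2 : (0.6931471803 : ℝ) < Real.log 2 := Real.log_two_gt_d9
      have hlogm : Real.log 2 ≤ Real.log m := Real.log_le_log (by norm_num) hm2'
      have hlogn : 0 ≤ Real.log n := Real.log_nonneg hn1
      nlinarith
    have hk' : 64 / ε ^ 2 * (1 + L) * S ≤ (k : ℝ) := hk
    have hCpos : (0:ℝ) < 64 / ε ^ 2 * (1 + L) := by positivity
    have hk0 : (0 : ℝ) < k := by nlinarith
    have hkpos : 0 < k := by exact_mod_cast hk0
    have hkS : S + L ≤ (k : ℝ) * ε ^ 2 / 64 := by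
      have h1 : 64 / ε ^ 2 * (1 + L) * S * (ε ^ 2 / 64) = (1 + L) * S := by
        field_simp
      have h2 := mul_le_mul_of_nonneg_right hk' (by positivity : (0:ℝ) ≤ ε ^ 2 / 64)
      rw [h1] at h2
      nlinarith
    set B : ℝ := (n : ℝ) * (m : ℝ) ^ m with hBdef
    have hm0' : (0 : ℝ) < (m : ℝ) := by linarith
    have hB0 : 0 < B := by positivity
    have hB1 : 1 ≤ B := by
      have h1 : (1 : ℝ) ≤ (m : ℝ) ^ m := one_le_pow₀ (by linarith)
      nlinarith
    have hlogB : Real.log B = S := by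
      rw [hBdef, Real.log_mul (by positivity) (by positivity), Real.log_pow, hSdef]
      ring
    have hexp : Real.exp (-((k : ℝ) * ε ^ 2) / 64) ≤ α / B := by
      have hab : (0 : ℝ) < α / B := by positivity
      calc Real.exp (-((k : ℝ) * ε ^ 2) / 64) ≤ Real.exp (Real.log (α / B)) := by
            apply Real.exp_le_exp.2
            rw [Real.log_div (ne_of_gt hα0) (ne_of_gt hB0), hlogB]
            have : Real.log α = -L := by rw [hLdef]; ring
            rw [this]
            linarith
        _ = α / B := Real.exp_log hab
    -- the per-pair regret functions
    set g : Fin n × (Fin m → Fin m) → (Fin n → Fin m) → ℝ :=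
      fun p a => u p.1 (Function.update a p.1 (p.2 (a p.1))) - u p.1 a with hgdef
    have hg1 : ∀ p a, |g p a| ≤ 1 := by
      intro p a
      have h1 := hu p.1 (Function.update a p.1 (p.2 (a p.1)))
      have h2 := hu p.1 a
      rw [hgdef, abs_le]
      constructor <;> simp only <;> linarith [h1.1, h1.2, h2.1, h2.2]
    have tail : ∀ (G : (Fin n → Fin m) → ℝ), (∀ a, |G a| ≤ 1) →
        ∀ x : (Fin n → Fin m) → ℝ, IsDist x →
        PrJoint k x (fun a => (k : ℝ) * (∑ y, x y * G y) + (k : ℝ) * (ε / 2)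
            ≤ ∑ s : Fin k, G (a s)) ≤ Real.exp (-((k : ℝ) * ε ^ 2) / 64) := by
      intro G hG x hx
      have hcher := chernoff k x hx G hG (ε / 16) (ε / 2) (by linarith) (by linarith)
      calc PrJoint k x _ ≤ Real.exp ((k : ℝ) * (4 * (ε / 16) ^ 2 - ε / 16 * (ε / 2))) := hcher
        _ = Real.exp (-((k : ℝ) * ε ^ 2) / 64) := by congr 1; ring
    constructor
    · -- YES case
      intro x hx hCE
      have hunion : PrJoint k x (fun a => ¬ IsCE u (empJoint k a) (δ + ε / 2)) ≤ α := by
        have hmono : PrJoint k x (fun a => ¬ IsCE u (empJoint k a) (δ + ε / 2))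
            ≤ PrJoint k x (fun a => ∃ p ∈ (univ : Finset (Fin n × (Fin m → Fin m))),
                (k : ℝ) * (∑ y, x y * g p y) + (k : ℝ) * (ε / 2) ≤ ∑ s : Fin k, g p (a s)) := by
          apply prJoint_mono k x hx.1
          intro a hnce
          rw [IsCE] at hnce
          push_neg at hnce
          obtain ⟨i, f, hif⟩ := hnce
          refine ⟨(i, f), Finset.mem_univ _, ?_⟩
          have hemp : ∑ a' : Fin n → Fin m, empJoint k a a' *
              (u i (Function.update a' i (f (a' i))) - u i a')
              = (∑ s : Fin k, g (i, f) (a s)) / k := emp_sum k a _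
          rw [hemp] at hif
          have hsum : (k : ℝ) * (δ + ε / 2) < ∑ s : Fin k, g (i, f) (a s) := by
            rw [lt_div_iff₀ hk0] at hif
            linarith [hif]
          have hμ : ∑ y, x y * g (i, f) y ≤ δ := hCE i f
          nlinarith [mul_le_mul_of_nonneg_left hμ (le_of_lt hk0), hsum]
        have hcard : (Finset.univ : Finset (Fin n × (Fin m → Fin m))).card = n * m ^ m := by
          simp [Fintype.card_fun]
        calc PrJoint k x (fun a => ¬ IsCE u (empJoint k a) (δ + ε / 2))
            ≤ ∑ p : Fin n × (Fin m → Fin m), PrJoint k x (fun a =>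
                (k : ℝ) * (∑ y, x y * g p y) + (k : ℝ) * (ε / 2) ≤ ∑ s : Fin k, g p (a s)) :=
              hmono.trans (prJoint_union k x hx.1 _ _)
          _ ≤ ∑ _p : Fin n × (Fin m → Fin m), α / B := by
              apply Finset.sum_le_sum
              intro p _
              exact (tail (g p) (hg1 p) x hx).trans hexp
          _ = B * (α / B) := by
              rw [Finset.sum_const, hcard, nsmul_eq_mul]
              congr 1
              rw [hBdef]
              push_cast
              ring
          _ = α := by field_simp
      have hc := prJoint_compl k x hx (fun a => IsCE u (empJoint k a) (δ + ε / 2))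
      linarith
    · -- NO case
      intro x hx hnCE
      rw [IsCE] at hnCE
      push_neg at hnCE
      obtain ⟨i, f, hμ⟩ := hnCE
      set G : (Fin n → Fin m) → ℝ := fun a => -(g (i, f) a) with hGdef
      have hG1 : ∀ a, |G a| ≤ 1 := fun a => by rw [hGdef]; rw [abs_neg]; exact hg1 (i, f) a
      have hGmean : ∑ y, x y * G y = -∑ y, x y * g (i, f) y := by
        rw [hGdef, ← Finset.sum_neg_distrib]
        exact Finset.sum_congr rfl fun y _ => by ring
      have hmono : PrJoint k x (fun a => ¬ (δ + ε / 2 < ∑ a' : Fin n → Fin m,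
            empJoint k a a' * (u i (Function.update a' i (f (a' i))) - u i a')))
          ≤ PrJoint k x (fun a => (k : ℝ) * (∑ y, x y * G y) + (k : ℝ) * (ε / 2)
              ≤ ∑ s : Fin k, G (a s)) := by
        apply prJoint_mono k x hx.1
        intro a hne
        push_neg at hne
        have hemp : ∑ a' : Fin n → Fin m, empJoint k a a' *
            (u i (Function.update a' i (f (a' i))) - u i a')
            = (∑ s : Fin k, g (i, f) (a s)) / k := emp_sum k a _
        rw [hemp, div_le_iff₀ hk0] at hne
        have hGsum : ∑ s : Fin k, G (a s) = -∑ s : Fin k, g (i, f) (a s) := by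
          rw [hGdef, ← Finset.sum_neg_distrib]
        rw [hGsum, hGmean]
        have hμ' : δ + ε < ∑ y, x y * g (i, f) y := hμ
        nlinarith [mul_le_mul_of_nonneg_left (le_of_lt hμ') (le_of_lt hk0), hne]
      have htail := (hmono.trans ((tail G hG1 x hx).trans hexp)).trans
        (div_le_self (le_of_lt hα0) hB1)
      have hc := prJoint_compl k x hx (fun a => δ + ε / 2 < ∑ a' : Fin n → Fin m,
          empJoint k a a' * (u i (Function.update a' i (f (a' i))) - u i a'))
      have hfinal : PrJoint k x (fun a => δ + ε / 2 < ∑ a' : Fin n → Fin m,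
          empJoint k a a' * (u i (Function.update a' i (f (a' i))) - u i a')) ≥ 1 - α := by
        linarith
      have hmono2 : PrJoint k x (fun a => δ + ε / 2 < ∑ a' : Fin n → Fin m,
          empJoint k a a' * (u i (Function.update a' i (f (a' i))) - u i a'))
          ≤ PrJoint k x (fun a => ¬ IsCE u (empJoint k a) (δ + ε / 2)) := by
        apply prJoint_mono k x hx.1
        intro a hlt hIs
        exact absurd (hIs i f) (not_le.2 hlt)
      linarith
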